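/- Suppose y ∈ ℝ satisfies x_a ≤ y, h_a < y and y < τ^{1/p}, where x_a = (2ρp/((1+p)τ))^{1/(1−p)} and h_a = x_a − ρ·x_a^p/τ + ρ. Then the map α(x) = y − ρ + ρ·x^p/τ has exactly one fixed point x† in [x_a, y]; a point x ∈ [x_a, y] is a fixed point of α if and only if x + ρ − ρ·x^p/τ = y; and for every initial point x₀ ∈ [x_a, y], the iterates x_{k+1} = α(x_k) converge to x†. -/

import Mathlib

theorem alpha_fixed_point (τ p ρ y : ℝ) (hτ : 1 < τ) (hp0 : 0 < p) (hp1 : p < 1)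
    (hρ : 0 < ρ)
    (hxa : (2 * ρ * p / ((1 + p) * τ)) ^ (1 / (1 - p)) ≤ y)
    (hha : (2 * ρ * p / ((1 + p) * τ)) ^ (1 / (1 - p)) -
        ρ * ((2 * ρ * p / ((1 + p) * τ)) ^ (1 / (1 - p))) ^ p / τ + ρ < y)
    (hyt : y < τ ^ (1 / p)) :
    ∃ xd ∈ Set.Icc ((2 * ρ * p / ((1 + p) * τ)) ^ (1 / (1 - p))) y,
      (y - ρ + ρ * xd ^ p / τ = xd) ∧
      (∀ x ∈ Set.Icc ((2 * ρ * p / ((1 + p) * τ)) ^ (1 / (1 - p))) y,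
        y - ρ + ρ * x ^ p / τ = x → x = xd) ∧
      (∀ x ∈ Set.Icc ((2 * ρ * p / ((1 + p) * τ)) ^ (1 / (1 - p))) y,
        (y - ρ + ρ * x ^ p / τ = x ↔ x + ρ - ρ * x ^ p / τ = y)) ∧
      (∀ x₀ ∈ Set.Icc ((2 * ρ * p / ((1 + p) * τ)) ^ (1 / (1 - p))) y,
        Filter.Tendsto (fun k : ℕ => (fun x : ℝ => y - ρ + ρ * x ^ p / τ)^[k] x₀)
          Filter.atTop (nhds xd)) := by
  have hτ0 : (0:ℝ) < τ := by linarith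
  set c : ℝ := 2 * ρ * p / ((1 + p) * τ) with hc_def
  set xa : ℝ := c ^ (1 / (1 - p)) with hxa_def
  set F : ℝ → ℝ := fun x => y - ρ + ρ * x ^ p / τ with hF_def
  have h1p : (0:ℝ) < 1 + p := by linarith
  have hc : 0 < c := by
    apply div_pos (by positivity) (by positivity)
  have hxa0 : 0 < xa := Real.rpow_pos_of_pos hc _
  have hp1' : (0:ℝ) < 1 - p := by linarith
  set L : ℝ := (1 + p) / 2 with hL_def
  have hL0 : 0 < L := by positivity
  have hL1 : L < 1 := by rw [hL_def]; linarith
  -- key computation: xa ^ (p - 1) = c⁻¹ and hence the derivative bound value is L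
  have hxapm : xa ^ (p - 1) = c⁻¹ := by
    rw [hxa_def, ← Real.rpow_mul hc.le,
      show (1 / (1 - p)) * (p - 1) = -1 by field_simp; ring,
      Real.rpow_neg_one c]
  have hkey : ρ * (p * xa ^ (p - 1)) / τ = L := by
    rw [hxapm, hc_def, hL_def]
    field_simp
  -- derivative of F
  have hderiv : ∀ x : ℝ, 0 < x →
      HasDerivAt F (ρ * (p * x ^ (p - 1)) / τ) x := by
    intro x hx
    have h := Real.hasDerivAt_rpow_const (x := x) (p := p) (Or.inl hx.ne')
    have h2 := ((h.const_mul ρ).div_const τ).const_add (y - ρ)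
    exact h2
  -- bound on the derivative on [xa, ∞)
  have hbound : ∀ x : ℝ, xa ≤ x → ρ * (p * x ^ (p - 1)) / τ ≤ L := by
    intro x hx
    have hx0 : 0 < x := lt_of_lt_of_le hxa0 hx
    have hle : x ^ (p - 1) ≤ xa ^ (p - 1) :=
      Real.rpow_le_rpow_of_nonpos hxa0 hx (by linarith)
    calc ρ * (p * x ^ (p - 1)) / τ ≤ ρ * (p * xa ^ (p - 1)) / τ := by gcongr
      _ = L := hkey
  have hboundlt : ∀ x : ℝ, xa < x → ρ * (p * x ^ (p - 1)) / τ < L := by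
    intro x hx
    have hle : x ^ (p - 1) < xa ^ (p - 1) :=
      Real.rpow_lt_rpow_of_neg hxa0 hx (by linarith)
    calc ρ * (p * x ^ (p - 1)) / τ < ρ * (p * xa ^ (p - 1)) / τ := by gcongr
      _ = L := hkey
  -- strict monotonicity of x ↦ K * x - ρ * x ^ p / τ on [xa, ∞) for K ≥ L
  have hgmono : ∀ K : ℝ, L ≤ K →
      StrictMonoOn (fun x => K * x - ρ * x ^ p / τ) (Set.Ici xa) := by
    intro K hK
    apply strictMonoOn_of_deriv_pos (convex_Ici xa)
    · intro x hx
      have hx0 : 0 < x := lt_of_lt_of_le hxa0 hx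
      have h := ((hasDerivAt_id x).const_mul K).sub
        (((Real.hasDerivAt_rpow_const (x := x) (p := p) (Or.inl hx0.ne')).const_mul ρ).div_const τ)
      exact h.continuousAt.continuousWithinAt
    · intro x hx
      rw [interior_Ici] at hx
      have hx0 : 0 < x := lt_trans hxa0 hx
      have h : HasDerivAt (fun x => K * x - ρ * x ^ p / τ)
          (K * 1 - ρ * (p * x ^ (p - 1)) / τ) x :=
        ((hasDerivAt_id x).const_mul K).sub
          (((Real.hasDerivAt_rpow_const (x := x) (p := p) (Or.inl hx0.ne')).const_mul ρ).div_const τ)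
      rw [h.deriv]
      have := hboundlt x hx
      nlinarith
  -- monotonicity of F (in base)
  have hmono : ∀ a b : ℝ, 0 ≤ a → a ≤ b → F a ≤ F b := by
    intro a b ha hab
    have h := Real.rpow_le_rpow ha hab hp0.le
    have : ρ * a ^ p / τ ≤ ρ * b ^ p / τ := by gcongr
    simp only [hF_def]
    linarith
  -- upper Lipschitz estimate
  have hlip : ∀ a b : ℝ, xa ≤ a → a ≤ b → F b - F a ≤ L * (b - a) := by
    intro a b ha hab
    have h := ((hgmono L le_rfl).monotoneOn) (Set.mem_Ici.mpr ha)
      (Set.mem_Ici.mpr (le_trans ha hab)) hab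
    simp only at h
    simp only [hF_def]
    linarith
  -- y > 0 and y ^ p < τ
  have hy0 : 0 < y := lt_of_lt_of_le hxa0 hxa
  have hyp : y ^ p < τ := by
    have h := Real.rpow_lt_rpow hy0.le hyt hp0
    rwa [← Real.rpow_mul hτ0.le, one_div, inv_mul_cancel₀ hp0.ne', Real.rpow_one] at h
  -- F maps [xa, y] into itself
  have hFxa : xa < F xa := by simp only [hF_def]; linarith
  have hFy : F y < y := by
    simp only [hF_def]
    have : ρ * y ^ p / τ < ρ := by
      rw [div_lt_iff₀ hτ0]
      nlinarith
    linarith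
  have hmaps : ∀ x ∈ Set.Icc xa y, F x ∈ Set.Icc xa y := by
    intro x hx
    exact ⟨le_trans hFxa.le (hmono xa x hxa0.le hx.1),
      le_trans (hmono x y (le_trans hxa0.le hx.1) hx.2) hFy.le⟩
  -- existence of a fixed point via IVT
  have hcont : ContinuousOn (fun x => F x - x) (Set.Icc xa y) := by
    intro x hx
    have hx0 : 0 < x := lt_of_lt_of_le hxa0 hx.1
    exact ((hderiv x hx0).sub (hasDerivAt_id x)).continuousAt.continuousWithinAt
  have hivt : (0:ℝ) ∈ (fun x => F x - x) '' Set.Icc xa y := by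
    apply intermediate_value_Icc' hxa hcont
    exact ⟨by linarith, by linarith⟩
  obtain ⟨xd, hxd_mem, hxd_eq⟩ := hivt
  have hxd : F xd = xd := by
    simp only [sub_eq_zero] at hxd_eq
    exact hxd_eq
  -- uniqueness
  have huniq : ∀ x ∈ Set.Icc xa y, F x = x → x = xd := by
    intro x hx hfx
    have h1 : (fun z => 1 * z - ρ * z ^ p / τ) x = (fun z => 1 * z - ρ * z ^ p / τ) xd := by
      simp only [one_mul, hF_def] at hfx hxd ⊢
      linarith
    exact (hgmono 1 hL1.le).injOn (Set.mem_Ici.mpr hx.1) (Set.mem_Ici.mpr hxd_mem.1) h1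
  -- contraction estimate towards xd
  have hcontr : ∀ x ∈ Set.Icc xa y, |F x - xd| ≤ L * |x - xd| := by
    intro x hx
    rcases le_total x xd with h | h
    · have h1 : F x ≤ F xd := hmono x xd (le_trans hxa0.le hx.1) h
      have h2 : F xd - F x ≤ L * (xd - x) := hlip x xd hx.1 h
      rw [abs_of_nonpos (by linarith [hxd]), abs_of_nonpos (by linarith)]
      rw [hxd] at h2
      linarith
    · have h1 : F xd ≤ F x := hmono xd x (le_trans hxa0.le hxd_mem.1) h
      have h2 : F x - F xd ≤ L * (x - xd) := hlip xd x hxd_mem.1 h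
      rw [abs_of_nonneg (by linarith [hxd]), abs_of_nonneg (by linarith)]
      rw [hxd] at h2
      linarith
  refine ⟨xd, hxd_mem, hxd, huniq, ?_, ?_⟩
  · intro x hx
    constructor <;> intro h <;> linarith
  · intro x₀ hx₀
    have hiter : ∀ k : ℕ, F^[k] x₀ ∈ Set.Icc xa y ∧
        |F^[k] x₀ - xd| ≤ L ^ k * |x₀ - xd| := by
      intro k
      induction k with
      | zero => simp [hx₀]
      | succ n ih =>
        obtain ⟨hmem, hest⟩ := ih
        refine ⟨?_, ?_⟩
        · rw [Function.iterate_succ_apply']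
          exact hmaps _ hmem
        · rw [Function.iterate_succ_apply']
          calc |F (F^[n] x₀) - xd| ≤ L * |F^[n] x₀ - xd| := hcontr _ hmem
            _ ≤ L * (L ^ n * |x₀ - xd|) := by gcongr
            _ = L ^ (n + 1) * |x₀ - xd| := by ring
    rw [tendsto_iff_dist_tendsto_zero]
    apply squeeze_zero (fun k => dist_nonneg) (fun k => ?_)
      (g := fun k : ℕ => L ^ k * |x₀ - xd|)
    · have := (tendsto_pow_atTop_nhds_zero_of_lt_one hL0.le hL1).mul_const |x₀ - xd|
      simpa using this
    · rw [Real.dist_eq]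
      exact (hiter k).2
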